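/- The real number e = ∑_{n=0}^∞ 1/n! is transcendental over ℚ, i.e. there is no nonzero polynomial with rational coefficients having e as a root. -/

import Mathlib

open Polynomial Real

private theorem etr_dvd_deriv (f : ℤ[X]) (a : ℤ) (m : ℕ) (h : (X - C a)^(m+1) ∣ f) :
    (X - C a)^m ∣ derivative f := by
  obtain ⟨q, rfl⟩ := h
  rw [derivative_mul, derivative_pow]
  simp only [derivative_sub, derivative_X, derivative_C, sub_zero, mul_one,
    Nat.add_sub_cancel]
  exact dvd_add (((dvd_refl _).mul_left _).mul_right _)
    (((pow_dvd_pow _ (Nat.le_succ m)).mul_right _))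

private theorem etr_L1 (f : ℤ[X]) (a : ℤ) (m j : ℕ) (hj : j < m) (h : (X - C a)^m ∣ f) :
    (derivative^[j] f).eval a = 0 := by
  have key : ∀ j, ∀ f : ℤ[X], (X - C a)^(m) ∣ f → (X - C a)^(m-j) ∣ derivative^[j] f := by
    intro j
    induction j with
    | zero => intro f h; simpa using h
    | succ j ih =>
      intro f h
      rw [Function.iterate_succ_apply']
      rcases le_or_gt m (j+1) with hm | hm
      · simp [Nat.sub_eq_zero_of_le hm]
      · have h2 : (X - C a) ^ ((m - (j+1)) + 1) ∣ derivative^[j] f := by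
          have := ih f h
          rwa [show m - (j+1) + 1 = m - j by omega]
        exact etr_dvd_deriv _ _ _ h2
  obtain ⟨q, hq⟩ := key j f h
  rw [hq]
  simp [eval_pow, zero_pow (by omega : m - j ≠ 0)]

private theorem etr_L2 (f : ℤ[X]) (j : ℕ) (a : ℤ) :
    (j.factorial : ℤ) ∣ (derivative^[j] f).eval a := by
  rw [Polynomial.eval_eq_sum_range]
  refine Finset.dvd_sum fun i _ => Dvd.dvd.mul_right ?_ _
  rw [Polynomial.coeff_iterate_derivative, nsmul_eq_mul]
  exact Dvd.dvd.mul_right (Int.natCast_dvd_natCast.2 (Nat.factorial_dvd_descFactorial _ _)) _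

private theorem etr_L3 (f : ℤ[X]) (j : ℕ) :
    (derivative^[j] f).eval 0 = (j.factorial : ℤ) * f.coeff j := by
  rw [← Polynomial.coeff_zero_eq_eval_zero, Polynomial.coeff_iterate_derivative]
  simp [Nat.descFactorial_self, mul_comm]

private theorem etr_remove_X (x : ℝ) (hx : x ≠ 0) (n : ℕ) :
    ∀ g : ℤ[X], g.natDegree ≤ n → g ≠ 0 → Polynomial.aeval x g = 0 →
      ∃ g' : ℤ[X], g'.coeff 0 ≠ 0 ∧ Polynomial.aeval x g' = 0 := by
  induction n with
  | zero =>
    intro g hdeg hg he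
    refine ⟨g, fun hc => hg ?_, he⟩
    exact (Polynomial.eq_C_of_natDegree_le_zero hdeg).trans (by rw [hc]; simp)
  | succ n ih =>
    intro g hdeg hg he
    by_cases h0 : g.coeff 0 = 0
    · obtain ⟨q, hq⟩ := (Polynomial.X_dvd_iff).2 h0
      have hq0 : q ≠ 0 := fun h => hg (by simp [hq, h])
      have hqe : Polynomial.aeval x q = 0 := by
        have : Polynomial.aeval x g = x * Polynomial.aeval x q := by
          rw [hq]; simp [mul_comm]
        rcases mul_eq_zero.1 (this ▸ he) with h | h
        · exact absurd h hx
        · exact h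
      have hdq : q.natDegree ≤ n := by
        have : g.natDegree = q.natDegree + 1 := by
          rw [hq, Polynomial.natDegree_X_mul hq0]
        omega
      exact ih q hdq hq0 hqe
    · exact ⟨g, h0, he⟩

private theorem etr_deriv_Psum (f : ℝ[X]) (d : ℕ) (hd : f.natDegree ≤ d) :
    derivative (∑ j ∈ Finset.range (d+1), derivative^[j] f)
      = (∑ j ∈ Finset.range (d+1), derivative^[j] f) - f := by
  rw [map_sum]
  have h1 : ∑ j ∈ Finset.range (d+1), derivative (derivative^[j] f)
      = ∑ j ∈ Finset.range (d+1), derivative^[j+1] f := by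
    refine Finset.sum_congr rfl fun j _ => ?_
    rw [Function.iterate_succ_apply']
  have h2 : derivative^[d+1] f = (0 : ℝ[X]) :=
    Polynomial.iterate_derivative_eq_zero (by omega)
  have h3 : ∑ j ∈ Finset.range (d+1), derivative^[j+1] f
      = (∑ j ∈ Finset.range (d+1), derivative^[j] f) + derivative^[d+1] f
          - derivative^[0] f := by
    rw [← Finset.sum_range_succ (fun j => derivative^[j] f) (d+1),
      Finset.sum_range_succ' (fun j => derivative^[j] f) (d+1)]
    abel
  rw [h1, h3, h2]
  simp

private theorem etr_key_identity (f : ℝ[X]) (P : ℝ[X]) (hP : derivative P = P - f) (k : ℝ) :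
    Real.exp k * P.eval 0 - P.eval k
      = Real.exp k * ∫ t in (0:ℝ)..k, Real.exp (-t) * f.eval t := by
  have hderiv : ∀ t ∈ Set.uIcc (0:ℝ) k,
      HasDerivAt (fun t => Real.exp (-t) * P.eval t)
        (-(Real.exp (-t) * f.eval t)) t := by
    intro t _
    have h1 : HasDerivAt (fun t : ℝ => Real.exp (-t)) (-Real.exp (-t)) t := by
      simpa using (hasDerivAt_neg t).exp
    have h2 : HasDerivAt (fun t : ℝ => P.eval t) ((derivative P).eval t) t :=
      P.hasDerivAt t
    have := h1.mul h2
    refine this.congr_deriv ?_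
    rw [hP]
    simp [eval_sub]
    ring
  have hint : IntervalIntegrable (fun t => -(Real.exp (-t) * f.eval t))
      MeasureTheory.volume 0 k :=
    (((Real.continuous_exp.comp continuous_neg).mul f.continuous).neg).intervalIntegrable _ _
  have h := (intervalIntegral.integral_eq_sub_of_hasDerivAt hderiv hint)
  rw [intervalIntegral.integral_neg] at h
  have hI : (∫ t in (0:ℝ)..k, Real.exp (-t) * f.eval t)
      = P.eval 0 - Real.exp (-k) * P.eval k := by
    have h0 : Real.exp (-(0:ℝ)) = 1 := by simp
    rw [h0, one_mul] at h
    linarith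
  rw [hI, mul_sub, ← mul_assoc, ← Real.exp_add]
  simp

private theorem etr_integral_bound (f : ℝ[X]) (k M : ℝ) (hk : 0 ≤ k)
    (hb : ∀ t ∈ Set.Icc (0:ℝ) k, |f.eval t| ≤ M) :
    |∫ t in (0:ℝ)..k, Real.exp (-t) * f.eval t| ≤ k * M := by
  have := intervalIntegral.norm_integral_le_of_norm_le_const
    (C := M) (f := fun t => Real.exp (-t) * f.eval t) (a := (0:ℝ)) (b := k) ?_
  · simpa [abs_of_nonneg hk, mul_comm] using this
  · intro t ht
    rw [Set.uIoc_of_le hk] at ht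
    have ht' : t ∈ Set.Icc (0:ℝ) k := ⟨le_of_lt ht.1, ht.2⟩
    have h1 : Real.exp (-t) ≤ 1 := Real.exp_le_one_iff.2 (by linarith [ht.1])
    have h2 : |f.eval t| ≤ M := hb t ht'
    calc ‖Real.exp (-t) * f.eval t‖ = Real.exp (-t) * |f.eval t| := by
          rw [norm_mul, Real.norm_eq_abs, abs_of_pos (Real.exp_pos _), Real.norm_eq_abs]
      _ ≤ 1 * M := mul_le_mul h1 h2 (abs_nonneg _) zero_le_one
      _ = M := one_mul M

private theorem etr_eval_bound (n p : ℕ) (t : ℝ) (ht : t ∈ Set.Icc (0:ℝ) n) :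
    |Polynomial.eval t (X^(p-1) * ∏ i ∈ Finset.range n, (X - C ((i:ℝ)+1))^p)|
      ≤ (((n:ℝ)+1)^(n+1))^p := by
  have hn1 : (1:ℝ) ≤ (n:ℝ)+1 := by have : (0:ℝ) ≤ n := Nat.cast_nonneg n; linarith
  have h1 : |t| ≤ (n+1:ℝ) := by
    rw [abs_of_nonneg ht.1]; linarith [ht.2]
  rw [eval_mul, eval_pow, eval_X, eval_prod, abs_mul, abs_pow]
  have h2 : |∏ i ∈ Finset.range n, Polynomial.eval t ((X - C ((i:ℝ)+1))^p)|
      ≤ ∏ i ∈ Finset.range n, ((n:ℝ)+1)^p := by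
    rw [Finset.abs_prod]
    refine Finset.prod_le_prod (fun i _ => abs_nonneg _) (fun i hi => ?_)
    rw [eval_pow, abs_pow, eval_sub, eval_X, eval_C]
    refine pow_le_pow_left₀ (abs_nonneg _) ?_ _
    rw [abs_le]
    have hin : (i:ℝ) + 1 ≤ n := by
      have h := Finset.mem_range.1 hi
      exact_mod_cast Nat.succ_le_of_lt h
    exact ⟨by linarith [ht.1], by linarith [ht.2]⟩
  calc |t|^(p-1) * |∏ i ∈ Finset.range n, Polynomial.eval t ((X - C ((i:ℝ)+1))^p)|
      ≤ ((n:ℝ)+1)^(p-1) * ∏ i ∈ Finset.range n, ((n:ℝ)+1)^p := by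
        apply mul_le_mul (pow_le_pow_left₀ (abs_nonneg _) h1 _) h2 (abs_nonneg _) (by positivity)
    _ = ((n:ℝ)+1)^(p-1 + n*p) := by
        rw [Finset.prod_const, Finset.card_range, ← pow_mul, ← pow_add, Nat.mul_comm]
    _ ≤ ((n:ℝ)+1)^((n+1)*p) := by
        apply pow_le_pow_right₀ hn1
        calc p-1 + n*p ≤ p + n*p := by omega
          _ = (n+1)*p := by ring
    _ = (((n:ℝ)+1)^(n+1))^p := by rw [← pow_mul]

private theorem etr_bridge (q : ℤ[X]) (k : ℤ) (j : ℕ) :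
    (Polynomial.derivative^[j] (q.map (Int.castRingHom ℝ))).eval ((k:ℝ))
      = (((Polynomial.derivative^[j] q).eval k : ℤ) : ℝ) := by
  rw [Polynomial.iterate_derivative_map q (Int.castRingHom ℝ) j, Polynomial.eval_map,
    show ((k:ℝ)) = ((Int.castRingHom ℝ) k) by simp, Polynomial.eval₂_at_apply]
  simp

theorem exp_one_transcendental : Transcendental ℚ (Real.exp 1) := by
  intro halg
  have he0 : Real.exp 1 ≠ 0 := (Real.exp_pos 1).ne'
  have hZ : IsAlgebraic ℤ (Real.exp 1) := (IsFractionRing.isAlgebraic_iff ℤ ℚ ℝ).2 halg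
  obtain ⟨g0, hg00, hge0⟩ := hZ
  obtain ⟨g, hc0, hge⟩ := etr_remove_X _ he0 g0.natDegree g0 le_rfl hg00 hge0
  set n := g.natDegree with hn
  -- the root equation
  have hsum : ∑ k ∈ Finset.range (n+1), (g.coeff k : ℝ) * Real.exp k = 0 := by
    have h := Polynomial.aeval_eq_sum_range (R := ℤ) (x := Real.exp 1) (p := g)
    rw [hge] at h
    rw [← hn] at h
    have : ∀ k ∈ Finset.range (n+1), g.coeff k • Real.exp 1 ^ k
        = (g.coeff k : ℝ) * Real.exp k := by
      intro k _
      rw [zsmul_eq_mul, ← Real.exp_nat_mul, mul_one]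
    rw [Finset.sum_congr rfl this] at h
    exact h.symm
  -- constants
  set B : ℝ := ((n:ℝ)+1)^(n+1) with hB
  have hB0 : 0 < B := by positivity
  set A0 : ℝ := (∑ k ∈ Finset.range (n+1), |(g.coeff k : ℝ)|) * (Real.exp n * n) with hA0
  have hA00 : 0 ≤ A0 := by positivity
  set K0 : ℝ := (A0 + 1) * B with hK0
  -- choose the prime p
  have htend : Filter.Tendsto (fun m : ℕ => K0 * (B^m / m.factorial))
      Filter.atTop (nhds 0) := by
    have := FloorSemiring.tendsto_pow_div_factorial_atTop (K := ℝ) B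
    simpa using this.const_mul K0
  have hev : ∀ᶠ m : ℕ in Filter.atTop, K0 * (B^m / m.factorial) < 1 :=
    htend.eventually_lt_const (by norm_num)
  obtain ⟨N, hN⟩ := Filter.eventually_atTop.1 hev
  obtain ⟨p, hple, hp⟩ :=
    Nat.exists_infinite_primes (N + 1 + (n + 1) + ((g.coeff 0).natAbs + 1))
  have hpn : n < p := by omega
  have hpc0 : (g.coeff 0).natAbs < p := by omega
  have hpN : N ≤ p - 1 := by omega
  have hp1 : 1 ≤ p := hp.one_lt.le
  have hsz : K0 * B^(p-1) < ((p-1).factorial : ℝ) := by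
    have h := hN (p-1) hpN
    have hf0 : (0:ℝ) < ((p-1).factorial : ℝ) := by
      exact_mod_cast (p-1).factorial_pos
    rw [mul_div_assoc'] at h
    calc K0 * B^(p-1) = K0 * B^(p-1) / ((p-1).factorial : ℝ) * ((p-1).factorial : ℝ) := by
          field_simp
      _ < 1 * ((p-1).factorial : ℝ) := by
          apply mul_lt_mul_of_pos_right _ hf0
          exact h
      _ = ((p-1).factorial : ℝ) := one_mul _
  -- the auxiliary polynomial
  set fZ : ℤ[X] := X^(p-1) * ∏ i ∈ Finset.range n, (X - C ((i:ℤ)+1))^p with hfZ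
  set fR : ℝ[X] := fZ.map (Int.castRingHom ℝ) with hfR
  have hfRform : fR = X^(p-1) * ∏ i ∈ Finset.range n, (X - C ((i:ℝ)+1))^p := by
    rw [hfR, hfZ, Polynomial.map_mul, Polynomial.map_pow, Polynomial.map_X,
      Polynomial.map_prod]
    congr 1
    refine Finset.prod_congr rfl fun i _ => ?_
    rw [Polynomial.map_pow, Polynomial.map_sub, Polynomial.map_X, Polynomial.map_C]
    simp
  set d : ℕ := fZ.natDegree with hd
  set P : ℝ[X] := ∑ j ∈ Finset.range (d+1), derivative^[j] fR with hPdef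
  set T : ℕ → ℤ := fun k => ∑ j ∈ Finset.range (d+1), (derivative^[j] fZ).eval (k:ℤ)
    with hT
  set w : ℤ := ∏ i ∈ Finset.range n, (-((i:ℤ)+1))^p with hw
  set J : ℤ := -∑ k ∈ Finset.range (n+1), g.coeff k * T k with hJ
  -- basic facts
  have hw0 : w ≠ 0 := by
    rw [hw]
    refine Finset.prod_ne_zero_iff.2 fun i _ => pow_ne_zero _ ?_
    intro h
    omega
  have hcoeffw : fZ.coeff (p-1) = w := by
    have h := Polynomial.coeff_X_pow_mul
      (∏ i ∈ Finset.range n, (X - C ((i:ℤ)+1))^p) (p-1) 0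
    rw [Nat.zero_add] at h
    rw [hfZ, h, Polynomial.coeff_zero_eq_eval_zero, Polynomial.eval_prod, hw]
    refine Finset.prod_congr rfl fun i _ => ?_
    simp
  have hpd : p - 1 ≤ d := by
    rw [hd]
    exact Polynomial.le_natDegree_of_ne_zero (by rw [hcoeffw]; exact hw0)
  have hPeval : ∀ k : ℕ, P.eval (k:ℝ) = (T k : ℝ) := by
    intro k
    rw [hPdef, hT, Polynomial.eval_finset_sum]
    push_cast
    refine Finset.sum_congr rfl fun j _ => ?_
    exact_mod_cast etr_bridge fZ (k:ℤ) j
  have hPderiv : derivative P = P - fR := by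
    rw [hPdef]
    exact etr_deriv_Psum fR d (Polynomial.natDegree_map_le.trans (le_of_eq hd.symm))
  -- real expression of J
  have hJreal : (J:ℝ) = ∑ k ∈ Finset.range (n+1),
      (g.coeff k : ℝ) * (Real.exp k * P.eval 0 - P.eval (k:ℝ)) := by
    have hsplit : ∑ k ∈ Finset.range (n+1),
        (g.coeff k:ℝ) * (Real.exp k * P.eval 0 - P.eval (k:ℝ))
        = (∑ k ∈ Finset.range (n+1), (g.coeff k:ℝ) * Real.exp k) * P.eval 0
          - ∑ k ∈ Finset.range (n+1), (g.coeff k:ℝ) * P.eval (k:ℝ) := by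
      rw [Finset.sum_mul, ← Finset.sum_sub_distrib]
      exact Finset.sum_congr rfl fun k _ => by ring
    rw [hsplit, hsum, zero_mul, zero_sub, hJ]
    push_cast
    rw [neg_inj]
    exact (Finset.sum_congr rfl fun k _ => by rw [hPeval k]).symm
  -- the analytic bound
  have hexpk : ∀ k : ℕ, k ≤ n → Real.exp (k:ℝ) ≤ Real.exp (n:ℝ) := by
    intro k hk
    exact Real.exp_le_exp.2 (by exact_mod_cast hk)
  have hterm : ∀ k ∈ Finset.range (n+1),
      |(g.coeff k:ℝ) * (Real.exp k * P.eval 0 - P.eval (k:ℝ))|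
        ≤ |(g.coeff k:ℝ)| * (Real.exp n * (n * B^p)) := by
    intro k hk
    have hkn : k ≤ n := by
      have := Finset.mem_range.1 hk; omega
    have hknR : (k:ℝ) ≤ (n:ℝ) := by exact_mod_cast hkn
    have hkR0 : (0:ℝ) ≤ (k:ℝ) := Nat.cast_nonneg k
    rw [etr_key_identity fR P hPderiv (k:ℝ), abs_mul]
    refine mul_le_mul_of_nonneg_left ?_ (abs_nonneg _)
    rw [abs_mul]
    have hInt : |∫ t in (0:ℝ)..(k:ℝ), Real.exp (-t) * fR.eval t| ≤ (k:ℝ) * B^p := by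
      refine etr_integral_bound fR (k:ℝ) (B^p) hkR0 fun t ht => ?_
      have htn : t ∈ Set.Icc (0:ℝ) (n:ℝ) := ⟨ht.1, le_trans ht.2 hknR⟩
      have := etr_eval_bound n p t htn
      rw [← hfRform] at this
      rwa [hB]
    calc |Real.exp (k:ℝ)| * |∫ t in (0:ℝ)..(k:ℝ), Real.exp (-t) * fR.eval t|
        ≤ Real.exp (n:ℝ) * ((k:ℝ) * B^p) := by
          refine mul_le_mul ?_ hInt (abs_nonneg _) (Real.exp_pos _).le
          rw [abs_of_pos (Real.exp_pos _)]
          exact hexpk k hkn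
      _ ≤ Real.exp (n:ℝ) * ((n:ℝ) * B^p) := by
          refine mul_le_mul_of_nonneg_left ?_ (Real.exp_pos _).le
          exact mul_le_mul_of_nonneg_right hknR (by positivity)
  have hJbound : |(J:ℝ)| < ((p-1).factorial : ℝ) := by
    rw [hJreal]
    calc |∑ k ∈ Finset.range (n+1), (g.coeff k:ℝ) * (Real.exp k * P.eval 0 - P.eval (k:ℝ))|
        ≤ ∑ k ∈ Finset.range (n+1), |(g.coeff k:ℝ) * (Real.exp k * P.eval 0 - P.eval (k:ℝ))| :=
          Finset.abs_sum_le_sum_abs _ _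
      _ ≤ ∑ k ∈ Finset.range (n+1), |(g.coeff k:ℝ)| * (Real.exp n * (n * B^p)) :=
          Finset.sum_le_sum hterm
      _ = A0 * B^p := by
          rw [← Finset.sum_mul, hA0]; ring
      _ < K0 * B^(p-1) := by
          rw [show p = (p-1)+1 by omega, pow_succ]
          rw [hK0]
          have : A0 * (B ^ (p - 1) * B) = (A0 * B) * B^(p-1) := by ring
          rw [show (p-1)+1-1 = p-1 by omega]
          calc A0 * (B ^ (p - 1) * B) = (A0 * B) * B^(p-1) := by ring
            _ < ((A0+1) * B) * B^(p-1) := by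
                have hAB : A0 * B < (A0+1)*B := by nlinarith
                exact mul_lt_mul_of_pos_right hAB (by positivity)
      _ < ((p-1).factorial : ℝ) := hsz
  -- integer side
  have hpfact : (p.factorial : ℤ) = (p:ℤ) * ((p-1).factorial : ℤ) := by
    rw [← Nat.mul_factorial_pred hp.ne_zero]
    push_cast
    ring
  have hzero0 : ∀ j < p-1, (derivative^[j] fZ).eval 0 = 0 := by
    intro j hj
    have hdvd : ((X:ℤ[X]) - C 0)^(p-1) ∣ fZ := by
      rw [hfZ]
      simpa using dvd_mul_right ((X:ℤ[X])^(p-1)) _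
    exact etr_L1 fZ 0 (p-1) j hj hdvd
  have hzerok : ∀ k : ℕ, 1 ≤ k → k ≤ n → ∀ j < p, (derivative^[j] fZ).eval (k:ℤ) = 0 := by
    intro k hk1 hkn j hj
    have hdvdk : ((X:ℤ[X]) - C (k:ℤ))^p ∣ fZ := by
      have hmem : k - 1 ∈ Finset.range n := Finset.mem_range.2 (by omega)
      have h1 : ((X:ℤ[X]) - C (((k-1 : ℕ):ℤ)+1))^p
          ∣ ∏ i ∈ Finset.range n, ((X:ℤ[X]) - C ((i:ℤ)+1))^p :=
        Finset.dvd_prod_of_mem _ hmem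
      have h2 : (((k-1:ℕ):ℤ)+1) = (k:ℤ) := by push_cast; omega
      rw [h2] at h1
      rw [hfZ]
      exact h1.mul_left _
    exact etr_L1 fZ (k:ℤ) p j hj hdvdk
  have hdvdj : ∀ j, p ≤ j → ∀ a : ℤ, (p.factorial:ℤ) ∣ (derivative^[j] fZ).eval a := by
    intro j hj a
    exact dvd_trans (Int.natCast_dvd_natCast.2 (Nat.factorial_dvd_factorial hj)) (etr_L2 fZ j a)
  have hTk : ∀ k : ℕ, 1 ≤ k → k ≤ n → (p.factorial:ℤ) ∣ T k := by
    intro k hk1 hkn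
    rw [hT]
    refine Finset.dvd_sum fun j _ => ?_
    rcases lt_or_ge j p with h | h
    · rw [hzerok k hk1 hkn j h]
      exact dvd_zero _
    · exact hdvdj j h _
  have hT0 : (p.factorial:ℤ) ∣ T 0 - ((p-1).factorial : ℤ) * w := by
    have hmem : p - 1 ∈ Finset.range (d+1) := Finset.mem_range.2 (by omega)
    have hsplit := Finset.sum_erase_add (Finset.range (d+1))
      (fun j => (derivative^[j] fZ).eval (0:ℤ)) hmem
    have hval : (derivative^[p-1] fZ).eval (0:ℤ) = ((p-1).factorial : ℤ) * w := by
      rw [etr_L3 fZ (p-1), hcoeffw]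
    have hT0eq : T 0 = (∑ j ∈ (Finset.range (d+1)).erase (p-1),
        (derivative^[j] fZ).eval (0:ℤ)) + ((p-1).factorial : ℤ) * w := by
      rw [hT]
      simp only [Nat.cast_zero]
      rw [← hval, hsplit]
    rw [hT0eq, add_sub_cancel_right]
    refine Finset.dvd_sum fun j hj => ?_
    have hjne : j ≠ p - 1 := (Finset.mem_erase.1 hj).1
    rcases lt_or_ge j p with h | h
    · have hjlt : j < p - 1 := by omega
      rw [hzero0 j hjlt]
      exact dvd_zero _
    · exact hdvdj j h _
  have hdvdJ : (p.factorial:ℤ) ∣ J + g.coeff 0 * (((p-1).factorial:ℤ) * w) := by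
    have hre : J + g.coeff 0 * (((p-1).factorial:ℤ) * w)
        = -(∑ i ∈ Finset.range n, g.coeff (i+1) * T (i+1))
          - g.coeff 0 * (T 0 - ((p-1).factorial:ℤ) * w) := by
      rw [hJ, Finset.sum_range_succ' (fun k => g.coeff k * T k) n]
      push_cast
      ring
    rw [hre]
    refine dvd_sub (dvd_neg.2 (Finset.dvd_sum fun i hi => ?_)) (hT0.mul_left _)
    have hin : i + 1 ≤ n := Nat.succ_le_of_lt (Finset.mem_range.1 hi)
    exact (hTk (i+1) (by omega) hin).mul_left _
  obtain ⟨m, hm⟩ := hdvdJ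
  have hJform : J = ((p-1).factorial:ℤ) * ((p:ℤ) * m - g.coeff 0 * w) := by
    have : J = (p.factorial:ℤ) * m - g.coeff 0 * (((p-1).factorial:ℤ) * w) := by
      omega
    rw [this, hpfact]
    ring
  have hpZ : Prime (p:ℤ) := Nat.prime_iff_prime_int.1 hp
  have hbr : (p:ℤ) * m - g.coeff 0 * w ≠ 0 := by
    intro h0
    have hdv : (p:ℤ) ∣ g.coeff 0 * w := ⟨m, by linarith⟩
    rcases hpZ.dvd_mul.1 hdv with hc | hcw
    · have h1 : p ∣ (g.coeff 0).natAbs := by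
        have := Int.natAbs_dvd_natAbs.2 hc
        simpa using this
      have h2 : (g.coeff 0).natAbs ≠ 0 := Int.natAbs_ne_zero.2 hc0
      have := Nat.le_of_dvd (Nat.pos_of_ne_zero h2) h1
      omega
    · rw [hw] at hcw
      rcases (hpZ.dvd_finset_prod_iff _).1 hcw with ⟨i, hi, hdi⟩
      have h3 : (p:ℤ) ∣ (-((i:ℤ)+1)) := hpZ.dvd_of_dvd_pow hdi
      have h4 : (p:ℤ) ∣ ((i:ℤ)+1) := (dvd_neg).1 h3
      have h5 : p ∣ (i+1) := by
        have := Int.natAbs_dvd_natAbs.2 h4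
        exact Int.natCast_dvd_natCast.1 (by exact_mod_cast h4)
      have h6 := Nat.le_of_dvd (by omega) h5
      have h7 := Finset.mem_range.1 hi
      omega
  have habs : ((p-1).factorial:ℤ) ≤ |J| := by
    rw [hJform, abs_mul, abs_of_nonneg (by positivity : (0:ℤ) ≤ ((p-1).factorial:ℤ))]
    exact le_mul_of_one_le_right (by positivity) (Int.one_le_abs hbr)
  have hfinal : ((p-1).factorial:ℝ) ≤ |(J:ℝ)| := by
    rw [← Int.cast_abs]
    exact_mod_cast habs
  linarith

/-- The real number e = ∑_{n=0}^∞ 1/n! is transcendental over ℚ: there is no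
nonzero polynomial with rational coefficients having it as a root. -/
theorem e_transcendental :
    Transcendental ℚ (∑' n : ℕ, (1 : ℝ) / (n.factorial : ℝ)) := by
  have h : (∑' n : ℕ, (1 : ℝ) / (n.factorial : ℝ)) = Real.exp 1 := by
    rw [Real.exp_eq_exp_ℝ, NormedSpace.exp_eq_tsum_div]
    simp
  rw [h]
  exact exp_one_transcendental
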